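/- Let v be a weight such that v^{-1} is also a weight, and let {α_I}_{I∈𝒟} be a Carleson sequence (with respect to Lebesgue measure) with intensity B, i.e., ∑_{I∈𝒟(J)} α_I ≤ B|J| for all dyadic J. Then the sequence {α_I / m_I(v^{-1})}_{I∈𝒟} is a v-Carleson sequence with intensity at most 4B; that is, for all dyadic intervals J, (1/|J|) ∑_{I∈𝒟(J)} α_I / m_I(v^{-1}) ≤ 4 B m_J v. -/

import Mathlib

open MeasureTheory Set

noncomputable section

/-- A dyadic interval, indexed by scale `n` and position `k`,
representing `[k·2⁻ⁿ, (k+1)·2⁻ⁿ)`. -/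
abbrev DI : Type := ℤ × ℤ

/-- The underlying set of a dyadic interval. -/
def dSet (I : DI) : Set ℝ :=
  Set.Ico ((I.2 : ℝ) * (2:ℝ) ^ (-I.1)) (((I.2 : ℝ) + 1) * (2:ℝ) ^ (-I.1))

/-- The length `|I|` of a dyadic interval. -/
def dLen (I : DI) : ℝ := (2:ℝ) ^ (-I.1)

/-- The left child `I₋`. -/
def dLeft (I : DI) : DI := (I.1 + 1, 2 * I.2)

/-- The right child `I₊`. -/
def dRight (I : DI) : DI := (I.1 + 1, 2 * I.2 + 1)

/-- The dyadic parent `Î`. -/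
def dParent (I : DI) : DI := (I.1 - 1, I.2 / 2)

/-- `I` is a dyadic subinterval of `J`. -/
def dSub (I J : DI) : Prop := J.1 ≤ I.1 ∧ dSet I ⊆ dSet J

/-- The average `m_I f` of `f` over `I` (w.r.t. Lebesgue measure). -/
def avg (I : DI) (f : ℝ → ℝ) : ℝ := (dLen I)⁻¹ * ∫ x in dSet I, f x

/-- `v(I) = ∫_I v`. -/
def wMass (v : ℝ → ℝ) (I : DI) : ℝ := ∫ x in dSet I, v x

/-- The L²-normalized Haar function `h_I`. -/
def haar (I : DI) : ℝ → ℝ := fun x =>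
  (Real.sqrt (dLen I))⁻¹ *
    ((dSet (dRight I)).indicator (fun _ => (1:ℝ)) x
      - (dSet (dLeft I)).indicator (fun _ => (1:ℝ)) x)

/-- The Haar coefficient `⟨b, h_I⟩`. -/
def hInner (b : ℝ → ℝ) (I : DI) : ℝ := ∫ x, b x * haar I x

/-- `Δ_I v = m_{I₊} v − m_{I₋} v`. -/
def deltaAvg (v : ℝ → ℝ) (I : DI) : ℝ := avg (dRight I) v - avg (dLeft I) v

/-- A weight: a locally integrable, a.e. positive function on `ℝ`. -/
def IsWeight (v : ℝ → ℝ) : Prop :=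
  MeasureTheory.LocallyIntegrable v MeasureTheory.volume ∧
    ∀ᵐ x ∂(MeasureTheory.volume : MeasureTheory.Measure ℝ), 0 < v x

/-- The reciprocal `u⁻¹` of a function. -/
def inv' (u : ℝ → ℝ) : ℝ → ℝ := fun x => (u x)⁻¹

/-- `{lam I}` is a `v`-Carleson sequence with intensity `C`
(finite-sum formulation, equivalent for nonnegative sequences). -/
def IsCarleson (v : ℝ → ℝ) (lam : DI → ℝ) (C : ℝ) : Prop :=
  ∀ J : DI, ∀ F : Finset DI, (∀ I ∈ F, dSub I J) → ∑ I ∈ F, lam I ≤ C * wMass v J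

/-- The `L²(v)` norm. -/
def L2norm (v f : ℝ → ℝ) : ℝ := Real.sqrt (∫ x, (f x)^2 * v x)

/-- The pair `(u,v)` satisfies the joint dyadic `𝒜₂` condition with constant `Q`. -/
def JointA2 (u v : ℝ → ℝ) (Q : ℝ) : Prop :=
  ∀ I : DI, avg I (inv' u) * avg I v ≤ Q

/-- `v` is in the dyadic `RH₁` class with constant `R`. -/
def RH1 (v : ℝ → ℝ) (R : ℝ) : Prop :=
  ∀ I : DI, avg I (fun x => (v x / avg I v) * Real.log (v x / avg I v)) ≤ R

lemma dLen_pos (I : DI) : 0 < dLen I := zpow_pos (by norm_num) _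

def dA (I : DI) : ℝ := (I.2 : ℝ) * dLen I

lemma dSet_eq (I : DI) : dSet I = Set.Ico (dA I) (dA I + dLen I) := by
  unfold dSet dA dLen; congr 1; ring

lemma dSet_nonempty (I : DI) : (dSet I).Nonempty := by
  rw [dSet_eq]; exact Set.nonempty_Ico.2 (by linarith [dLen_pos I])

lemma measurableSet_dSet (I : DI) : MeasurableSet (dSet I) := measurableSet_Ico

lemma dLen_left (I : DI) : dLen (dLeft I) = dLen I / 2 := by
  unfold dLen dLeft
  show (2:ℝ) ^ (-(I.1 + 1)) = 2 ^ (-I.1) / 2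
  rw [neg_add, zpow_add₀ (by norm_num : (2:ℝ) ≠ 0), zpow_neg_one]
  ring

lemma dLen_right (I : DI) : dLen (dRight I) = dLen I / 2 := by
  unfold dLen dRight
  show (2:ℝ) ^ (-(I.1 + 1)) = 2 ^ (-I.1) / 2
  rw [neg_add, zpow_add₀ (by norm_num : (2:ℝ) ≠ 0), zpow_neg_one]
  ring

lemma dA_left (I : DI) : dA (dLeft I) = dA I := by
  unfold dA
  rw [dLen_left]
  show ((2 * I.2 : ℤ) : ℝ) * (dLen I / 2) = _
  push_cast; ring

lemma dA_right (I : DI) : dA (dRight I) = dA I + dLen I / 2 := by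
  unfold dA
  rw [dLen_right]
  show ((2 * I.2 + 1 : ℤ) : ℝ) * (dLen I / 2) = _
  push_cast; ring

lemma dSet_union (I : DI) : dSet (dLeft I) ∪ dSet (dRight I) = dSet I := by
  rw [dSet_eq, dSet_eq, dSet_eq, dA_left, dA_right, dLen_left, dLen_right]
  have h : dA I + dLen I / 2 + dLen I / 2 = dA I + dLen I := by ring
  rw [h]
  exact Set.Ico_union_Ico_eq_Ico (by linarith [dLen_pos I]) (by linarith [dLen_pos I])

lemma dSet_disjoint_children (I : DI) :
    Disjoint (dSet (dLeft I)) (dSet (dRight I)) := by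
  rw [dSet_eq, dSet_eq, dA_left, dA_right, dLen_left, dLen_right]
  exact Set.Ico_disjoint_Ico_same

lemma dSub_left (I : DI) : dSub (dLeft I) I :=
  ⟨by simp [dLeft]; try omega
   , by rw [← dSet_union I]; exact Set.subset_union_left⟩

lemma dSub_right (I : DI) : dSub (dRight I) I :=
  ⟨by simp [dRight]; try omega
   , by rw [← dSet_union I]; exact Set.subset_union_right⟩

lemma dSub_trans {I J K : DI} (h1 : dSub I J) (h2 : dSub J K) : dSub I K :=
  ⟨le_trans h2.1 h1.1, h1.2.trans h2.2⟩

lemma dSub_refl (I : DI) : dSub I I := ⟨le_rfl, subset_rfl⟩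

/-- For dyadic intervals at finer scale: contained or disjoint. -/
lemma dSet_subset_or_disjoint {I K : DI} (h : K.1 ≤ I.1) :
    dSet I ⊆ dSet K ∨ Disjoint (dSet I) (dSet K) := by
  obtain ⟨n, k⟩ := I
  obtain ⟨m, j⟩ := K
  simp only at h
  set d : ℕ := (n - m).toNat with hd
  have hdn : (d : ℤ) = n - m := Int.toNat_of_nonneg (by omega)
  have hepos : (0:ℤ) < 2 ^ d := by positivity
  have hpow : (0:ℝ) < 2 ^ (-n) := zpow_pos (by norm_num) _
  have he2 : (((2:ℤ) ^ d : ℤ) : ℝ) * 2 ^ (-n) = 2 ^ (-m) := by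
    push_cast
    rw [← zpow_natCast (2:ℝ) d, ← zpow_add₀ (by norm_num : (2:ℝ) ≠ 0)]
    congr 1; omega
  have hKset : dSet (m, j) = Set.Ico (((j * 2 ^ d : ℤ) : ℝ) * 2 ^ (-n))
      ((((j + 1) * 2 ^ d : ℤ) : ℝ) * 2 ^ (-n)) := by
    unfold dSet
    simp only
    congr 1 <;> (push_cast [← he2]; try push_cast
    ) <;> try ring
  have hIset : dSet (n, k) = Set.Ico (((k : ℤ) : ℝ) * 2 ^ (-n))
      (((k + 1 : ℤ) : ℝ) * 2 ^ (-n)) := by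
    unfold dSet; simp only; congr 1 <;> push_cast <;> ring
  have key : ∀ a b : ℤ, a ≤ b → ((a:ℝ) * 2 ^ (-n)) ≤ ((b:ℝ) * 2 ^ (-n)) := by
    intro a b hab
    exact mul_le_mul_of_nonneg_right (by exact_mod_cast hab) hpow.le
  rcases lt_trichotomy k (j * 2 ^ d) with hlt | heq | hgt
  · right
    rw [hIset, hKset]
    apply Set.disjoint_left.2
    intro x hx hx'
    have h1 : x < ((k+1 : ℤ):ℝ) * 2 ^ (-n) := hx.2
    have h2 : ((j * 2 ^ d : ℤ):ℝ) * 2 ^ (-n) ≤ x := hx'.1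
    have := key (k+1) (j*2^d) (by omega)
    linarith
  · left
    rw [hIset, hKset]
    exact Set.Ico_subset_Ico (key _ _ (by omega)) (key _ _ (by nlinarith))
  · by_cases hk2 : k + 1 ≤ (j+1) * 2 ^ d
    · left
      rw [hIset, hKset]
      exact Set.Ico_subset_Ico (key _ _ (by omega)) (key _ _ hk2)
    · right
      rw [hIset, hKset]
      apply Set.disjoint_left.2
      intro x hx hx'
      have h1 : x < (((j+1) * 2 ^ d : ℤ):ℝ) * 2 ^ (-n) := hx'.2
      have h2 : ((k : ℤ):ℝ) * 2 ^ (-n) ≤ x := hx.1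
      have := key ((j+1)*2^d) k (by omega)
      linarith

lemma dSet_eq_iff {I K : DI} (h : I.1 = K.1) (hsub : dSet I ⊆ dSet K) : I = K := by
  have hlen : dLen I = dLen K := by unfold dLen; rw [h]
  have hmem : dA I ∈ dSet I := by
    rw [dSet_eq]; exact ⟨le_refl _, by linarith [dLen_pos I]⟩
  have h1 := hsub hmem
  rw [dSet_eq] at h1
  obtain ⟨ha, hb⟩ := h1
  unfold dA at ha hb
  rw [hlen] at ha hb
  have hL := dLen_pos K
  have e1 : (K.2 : ℝ) ≤ I.2 := le_of_mul_le_mul_right ha hL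
  have e2 : (I.2 : ℝ) < K.2 + 1 := by
    have hb' : (I.2 : ℝ) * dLen K < ((K.2 : ℝ) + 1) * dLen K := by linarith [hb]; 
    exact lt_of_mul_lt_mul_right hb' hL.le
  have e1' : K.2 ≤ I.2 := by exact_mod_cast e1
  have e2' : I.2 < K.2 + 1 := by exact_mod_cast e2
  exact Prod.ext h (by omega)

lemma dSub_trichotomy {I K : DI} (h : dSub I K) :
    I = K ∨ dSub I (dLeft K) ∨ dSub I (dRight K) := by
  rcases eq_or_lt_of_le h.1 with heq | hlt
  · exact Or.inl (dSet_eq_iff heq.symm h.2)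
  · right
    have hscale : (dLeft K).1 ≤ I.1 := by show K.1 + 1 ≤ I.1; omega
    have hscale' : (dRight K).1 ≤ I.1 := by show K.1 + 1 ≤ I.1; omega
    rcases dSet_subset_or_disjoint hscale with hs | hdisj
    · exact Or.inl ⟨hscale, hs⟩
    rcases dSet_subset_or_disjoint hscale' with hs | hdisj'
    · exact Or.inr ⟨hscale', hs⟩
    exfalso
    obtain ⟨x, hx⟩ := dSet_nonempty I
    have hxK : x ∈ dSet K := h.2 hx
    rw [← dSet_union] at hxK
    rcases hxK with h1 | h1
    · exact hdisj.le_bot ⟨hx, h1⟩ |>.elim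
    · exact hdisj'.le_bot ⟨hx, h1⟩ |>.elim

lemma not_dSub_self_child_left (K : DI) : ¬ dSub K (dLeft K) := by
  intro h; have h1 := h.1; simp only [dLeft] at h1; omega

lemma not_dSub_self_child_right (K : DI) : ¬ dSub K (dRight K) := by
  intro h; have h1 := h.1; simp only [dRight] at h1; omega

lemma not_dSub_both {I K : DI} (h1 : dSub I (dLeft K)) (h2 : dSub I (dRight K)) : False := by
  obtain ⟨x, hx⟩ := dSet_nonempty I
  exact (dSet_disjoint_children K).le_bot ⟨h1.2 hx, h2.2 hx⟩

noncomputable instance decDSub (I K : DI) : Decidable (dSub I K) := Classical.dec _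

/-- The collection of members of `F` inside `K`. -/
def Fk (F : Finset DI) (K : DI) : Finset DI := F.filter (fun I => dSub I K)

lemma mem_Fk {F : Finset DI} {K I : DI} : I ∈ Fk F K ↔ I ∈ F ∧ dSub I K := by
  simp [Fk]

lemma Fk_child_subset {F : Finset DI} {K : DI} :
    Fk F (dLeft K) ⊆ Fk F K ∧ Fk F (dRight K) ⊆ Fk F K := by
  constructor <;> intro I hI <;> rw [mem_Fk] at hI ⊢ <;>
    exact ⟨hI.1, dSub_trans hI.2 (by first | exact dSub_left K | exact dSub_right K)⟩

/-- Decomposition of a sum over `Fk F K`. -/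
lemma Fk_sum_decomp {F : Finset DI} {K : DI} (g : DI → ℝ) :
    ∑ I ∈ Fk F K, g I =
      (if K ∈ F then g K else 0) + ∑ I ∈ Fk F (dLeft K), g I + ∑ I ∈ Fk F (dRight K), g I := by
  classical
  have hdisj : Disjoint (Fk F (dLeft K)) (Fk F (dRight K)) := by
    rw [Finset.disjoint_left]
    intro I h1 h2
    exact not_dSub_both (mem_Fk.1 h1).2 (mem_Fk.1 h2).2
  have hU : Fk F (dLeft K) ∪ Fk F (dRight K) ⊆ Fk F K := by
    intro I hI
    rcases Finset.mem_union.1 hI with h | h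
    · exact Fk_child_subset.1 h
    · exact Fk_child_subset.2 h
  have hKnot : K ∉ Fk F (dLeft K) ∪ Fk F (dRight K) := by
    intro hK
    rcases Finset.mem_union.1 hK with h | h
    · exact not_dSub_self_child_left K (mem_Fk.1 h).2
    · exact not_dSub_self_child_right K (mem_Fk.1 h).2
  by_cases hKF : K ∈ F
  · have hEq : Fk F K = insert K (Fk F (dLeft K) ∪ Fk F (dRight K)) := by
      ext I
      simp only [Finset.mem_insert, Finset.mem_union, mem_Fk]
      constructor
      · rintro ⟨hIF, hIK⟩
        rcases dSub_trichotomy hIK with rfl | h | h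
        · exact Or.inl rfl
        · exact Or.inr (Or.inl ⟨hIF, h⟩)
        · exact Or.inr (Or.inr ⟨hIF, h⟩)
      · rintro (rfl | ⟨hIF, h⟩ | ⟨hIF, h⟩)
        · exact ⟨hKF, dSub_refl _⟩
        · exact ⟨hIF, dSub_trans h (dSub_left K)⟩
        · exact ⟨hIF, dSub_trans h (dSub_right K)⟩
    rw [hEq, Finset.sum_insert hKnot, Finset.sum_union hdisj, if_pos hKF]
    ring
  · have hEq : Fk F K = Fk F (dLeft K) ∪ Fk F (dRight K) := by
      ext I
      simp only [Finset.mem_union, mem_Fk]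
      constructor
      · rintro ⟨hIF, hIK⟩
        rcases dSub_trichotomy hIK with rfl | h | h
        · exact absurd hIF hKF
        · exact Or.inl ⟨hIF, h⟩
        · exact Or.inr ⟨hIF, h⟩
      · rintro (⟨hIF, h⟩ | ⟨hIF, h⟩)
        · exact ⟨hIF, dSub_trans h (dSub_left K)⟩
        · exact ⟨hIF, dSub_trans h (dSub_right K)⟩
    rw [hEq, Finset.sum_union hdisj, if_neg hKF]
    ring

/-- The termination measure. -/
def Fmeas (F : Finset DI) (K : DI) : ℕ := ∑ I ∈ Fk F K, (I.1 + 1 - K.1).toNat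

lemma Fmeas_child_lt {F : Finset DI} {K : DI} (hne : (Fk F K).Nonempty) :
    Fmeas F (dLeft K) < Fmeas F K ∧ Fmeas F (dRight K) < Fmeas F K := by
  have hpos : 1 ≤ Fmeas F K := by
    obtain ⟨I, hI⟩ := hne
    have h1 : 1 ≤ (I.1 + 1 - K.1).toNat := by
      have := (mem_Fk.1 hI).2.1; omega
    calc 1 ≤ (I.1 + 1 - K.1).toNat := h1
      _ ≤ _ := Finset.single_le_sum (f := fun I : DI => (I.1 + 1 - K.1).toNat)
          (fun i _ => Nat.zero_le _) hI
  have key : ∀ K' : DI, K'.1 = K.1 + 1 → Fk F K' ⊆ Fk F K → Fmeas F K' < Fmeas F K := by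
    intro K' hK1 hsub
    rcases Finset.eq_empty_or_nonempty (Fk F K') with he | hne'
    · unfold Fmeas; rw [he]; rw [Finset.sum_empty]; unfold Fmeas at hpos; omega
    · have : Fmeas F K' < ∑ I ∈ Fk F K', (I.1 + 1 - K.1).toNat := by
        unfold Fmeas
        apply Finset.sum_lt_sum_of_nonempty hne'
        intro I hI
        have hsc : K'.1 ≤ I.1 := (mem_Fk.1 hI).2.1
        omega
      calc Fmeas F K' < ∑ I ∈ Fk F K', (I.1 + 1 - K.1).toNat := this
        _ ≤ Fmeas F K := Finset.sum_le_sum_of_subset hsub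
  exact ⟨key _ rfl Fk_child_subset.1, key _ rfl Fk_child_subset.2⟩
open MeasureTheory Set

/-- Cauchy–Schwarz for integrals, via the discriminant trick. -/
lemma integral_cs {μ : Measure ℝ} {p q : ℝ → ℝ}
    (hp2 : Integrable (fun x => p x ^ 2) μ) (hq2 : Integrable (fun x => q x ^ 2) μ)
    (hpq : Integrable (fun x => p x * q x) μ) :
    (∫ x, p x * q x ∂μ) ^ 2 ≤ (∫ x, p x ^ 2 ∂μ) * (∫ x, q x ^ 2 ∂μ) := by
  set A := ∫ x, p x ^ 2 ∂μ with hA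
  set S := ∫ x, p x * q x ∂μ with hS
  set C := ∫ x, q x ^ 2 ∂μ with hC
  have hA0 : 0 ≤ A := integral_nonneg fun x => sq_nonneg _
  have hC0 : 0 ≤ C := integral_nonneg fun x => sq_nonneg _
  have key : ∀ t : ℝ, 0 ≤ t ^ 2 * A - 2 * t * S + C := by
    intro t
    have h2 : 0 ≤ ∫ x, (t * p x - q x) ^ 2 ∂μ := integral_nonneg fun x => sq_nonneg _
    have h3 : ∫ x, (t * p x - q x) ^ 2 ∂μ
        = ∫ x, (t ^ 2 * p x ^ 2 - 2 * t * (p x * q x) + q x ^ 2) ∂μ := by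
      congr 1; funext x; ring
    have h4 : ∫ x, (t ^ 2 * p x ^ 2 - 2 * t * (p x * q x)) + q x ^ 2 ∂μ
        = (∫ x, t ^ 2 * p x ^ 2 - 2 * t * (p x * q x) ∂μ) + ∫ x, q x ^ 2 ∂μ :=
      integral_add ((hp2.const_mul _).sub (hpq.const_mul _)) hq2
    have h5 : ∫ x, t ^ 2 * p x ^ 2 - 2 * t * (p x * q x) ∂μ
        = (∫ x, t ^ 2 * p x ^ 2 ∂μ) - ∫ x, 2 * t * (p x * q x) ∂μ :=
      integral_sub (hp2.const_mul _) (hpq.const_mul _)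
    have h6 : ∫ x, t ^ 2 * p x ^ 2 ∂μ = t ^ 2 * A := integral_const_mul _ _
    have h7 : ∫ x, 2 * t * (p x * q x) ∂μ = 2 * t * S := integral_const_mul _ _
    have h8 : ∫ x, (t ^ 2 * p x ^ 2 - 2 * t * (p x * q x) + q x ^ 2) ∂μ
        = t ^ 2 * A - 2 * t * S + C := by
      rw [show (fun x => t ^ 2 * p x ^ 2 - 2 * t * (p x * q x) + q x ^ 2)
          = fun x => (t ^ 2 * p x ^ 2 - 2 * t * (p x * q x)) + q x ^ 2 from rfl, h4, h5, h6, h7]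
    rw [h3, h8] at h2
    linarith [h2]
  rcases eq_or_lt_of_le hA0 with hA0' | hApos
  · have hS0 : S = 0 := by
      by_contra hS0
      have h1 := key ((C + 1) / (2 * S))
      rw [← hA0'] at h1
      have h2 : 2 * ((C + 1) / (2 * S)) * S = C + 1 := by field_simp
      rw [h2] at h1
      simp at h1
      linarith
    rw [hS0, ← hA0']
    simp
  · have h1 := key (S / A)
    have h2 : (S / A) ^ 2 * A = S ^ 2 / A := by field_simp
    have h3 : 2 * (S / A) * S = 2 * (S ^ 2 / A) := by field_simp
    rw [h2, h3] at h1
    have h4 : S ^ 2 / A ≤ C := by linarith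
    calc S ^ 2 = S ^ 2 / A * A := by field_simp
      _ ≤ C * A := mul_le_mul_of_nonneg_right h4 hA0
      _ = A * C := by ring

/-- Engel form / titu inequality for two terms. -/
lemma engel2 {u₁ u₂ s₁ s₂ : ℝ} (h₁ : 0 < s₁) (h₂ : 0 < s₂) :
    (u₁ + u₂) ^ 2 / (s₁ + s₂) ≤ u₁ ^ 2 / s₁ + u₂ ^ 2 / s₂ := by
  rw [div_add_div _ _ h₁.ne' h₂.ne', div_le_div_iff₀ (by positivity) (by positivity)]
  nlinarith [sq_nonneg (u₁ * s₂ - u₂ * s₁), mul_pos h₁ h₂]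

/-- The key scalar inequality for the induction step of the Carleson embedding. -/
lemma step_ineq {a l B Am Ap : ℝ} (hB : 0 < B) (hl : 0 < l) (ha : 0 ≤ a)
    (hAm : 0 ≤ Am) (hAp : 0 ≤ Ap) (hA : a + Am + Ap ≤ B * l) :
    a / l ^ 2 + 4 * B ^ 2 / (B * l + (a + Am + Ap)) ≤ 4 * B ^ 2 / (B * l + (Am + Ap)) := by
  set P := B * l + (Am + Ap) with hP
  set Q := B * l + (a + Am + Ap) with hQ
  have hPpos : 0 < P := by positivity
  have hQpos : 0 < Q := by positivity
  have hP2 : P ≤ 2 * B * l := by nlinarith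
  have hQ2 : Q ≤ 2 * B * l := by nlinarith
  have hPQ : P * Q ≤ (2 * B * l) * (2 * B * l) := mul_le_mul hP2 hQ2 hQpos.le (by positivity)
  have key : a * (P * Q) ≤ a * (4 * B ^ 2 * l ^ 2) :=
    mul_le_mul_of_nonneg_left (by nlinarith) ha
  rw [div_add_div _ _ (by positivity : (l : ℝ) ^ 2 ≠ 0) hQpos.ne', div_le_div_iff₀ (by positivity) hPpos]
  have hQP : Q = P + a := by rw [hP, hQ]; ring
  nlinarith [key, sq_nonneg l]

lemma volume_dSet (I : DI) : volume (dSet I) = ENNReal.ofReal (dLen I) := by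
  rw [dSet_eq, Real.volume_Ico]
  congr 1; ring

lemma volume_dSet_toReal (I : DI) : (volume (dSet I)).toReal = dLen I := by
  rw [volume_dSet, ENNReal.toReal_ofReal (dLen_pos I).le]

lemma volume_dSet_lt_top (I : DI) : volume (dSet I) < ⊤ := by
  rw [volume_dSet]; exact ENNReal.ofReal_lt_top

lemma setIntegral_one (I : DI) : ∫ _ in dSet I, (1:ℝ) = dLen I := by
  rw [setIntegral_const, measureReal_def, volume_dSet_toReal, smul_eq_mul, mul_one]

/-- Splitting a set integral over a dyadic interval into its children. -/
lemma setIntegral_children {g : ℝ → ℝ} (K : DI)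
    (hgl : IntegrableOn g (dSet (dLeft K)) volume)
    (hgr : IntegrableOn g (dSet (dRight K)) volume) :
    ∫ x in dSet K, g x =
      (∫ x in dSet (dLeft K), g x) + ∫ x in dSet (dRight K), g x := by
  rw [← dSet_union K,
    setIntegral_union (dSet_disjoint_children K) (measurableSet_dSet _) hgl hgr]

/-- Dyadic Carleson embedding theorem (finite version), by induction on the tree. -/
lemma carleson_embedding (f : ℝ → ℝ) (hf0 : ∀ x, 0 ≤ f x)
    (hfInt : ∀ K : DI, IntegrableOn f (dSet K) volume)
    (hf2Int : ∀ K : DI, IntegrableOn (fun x => f x ^ 2) (dSet K) volume)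
    (hCS : ∀ K : DI, (∫ x in dSet K, f x) ^ 2 ≤ dLen K * ∫ x in dSet K, f x ^ 2)
    (F : Finset DI) (α : DI → ℝ) (hα : ∀ I, 0 ≤ α I) (B : ℝ) (hB : 0 < B)
    (hCar : ∀ K : DI, ∑ I ∈ Fk F K, α I ≤ B * dLen K) :
    ∀ (m : ℕ) (K : DI), Fmeas F K ≤ m →
      ∑ I ∈ Fk F K, α I * ((∫ x in dSet I, f x) / dLen I) ^ 2 ≤
        4 * B * (∫ x in dSet K, f x ^ 2) -
          4 * B ^ 2 * (∫ x in dSet K, f x) ^ 2 / (B * dLen K + ∑ I ∈ Fk F K, α I) := by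
  have hw0 : ∀ K : DI, 0 ≤ ∫ x in dSet K, f x ^ 2 :=
    fun K => setIntegral_nonneg (measurableSet_dSet K) fun x _ => sq_nonneg _
  have hy0 : ∀ K : DI, 0 ≤ ∫ x in dSet K, f x :=
    fun K => setIntegral_nonneg (measurableSet_dSet K) fun x _ => hf0 x
  have hA0 : ∀ K : DI, 0 ≤ ∑ I ∈ Fk F K, α I :=
    fun K => Finset.sum_nonneg fun I _ => hα I
  -- case of no intervals below K
  have base : ∀ K : DI, Fk F K = ∅ →
      ∑ I ∈ Fk F K, α I * ((∫ x in dSet I, f x) / dLen I) ^ 2 ≤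
        4 * B * (∫ x in dSet K, f x ^ 2) -
          4 * B ^ 2 * (∫ x in dSet K, f x) ^ 2 / (B * dLen K + ∑ I ∈ Fk F K, α I) := by
    intro K hK
    rw [hK]
    simp only [Finset.sum_empty, add_zero]
    have hl := dLen_pos K
    have h1 : 4 * B ^ 2 * (∫ x in dSet K, f x) ^ 2 / (B * dLen K)
        = 4 * B * ((∫ x in dSet K, f x) ^ 2 / dLen K) := by
      field_simp
    rw [h1]
    have h2 : (∫ x in dSet K, f x) ^ 2 / dLen K ≤ ∫ x in dSet K, f x ^ 2 := by
      rw [div_le_iff₀ hl]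
      calc (∫ x in dSet K, f x) ^ 2 ≤ dLen K * ∫ x in dSet K, f x ^ 2 := hCS K
        _ = (∫ x in dSet K, f x ^ 2) * dLen K := by ring
    nlinarith [h2, hB]
  intro m
  induction m with
  | zero =>
    intro K hK
    apply base
    rcases Finset.eq_empty_or_nonempty (Fk F K) with h | hne
    · exact h
    · exfalso
      obtain ⟨I, hI⟩ := hne
      have h1 : 1 ≤ (I.1 + 1 - K.1).toNat := by
        have := (mem_Fk.1 hI).2.1; omega
      have : 1 ≤ Fmeas F K :=
        le_trans h1 (Finset.single_le_sum (f := fun I : DI => (I.1 + 1 - K.1).toNat)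
          (fun i _ => Nat.zero_le _) hI)
      omega
  | succ m ih =>
    intro K hK
    rcases Finset.eq_empty_or_nonempty (Fk F K) with h | hne
    · exact base K h
    have hlt := Fmeas_child_lt (F := F) (K := K) hne
    have ihL := ih (dLeft K) (by omega)
    have ihR := ih (dRight K) (by omega)
    -- notation
    set l := dLen K with hldef
    have hl : 0 < l := dLen_pos K
    set y := ∫ x in dSet K, f x with hy
    set yL := ∫ x in dSet (dLeft K), f x with hyL
    set yR := ∫ x in dSet (dRight K), f x with hyR
    set w := ∫ x in dSet K, f x ^ 2 with hw
    set wL := ∫ x in dSet (dLeft K), f x ^ 2 with hwL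
    set wR := ∫ x in dSet (dRight K), f x ^ 2 with hwR
    set AL := ∑ I ∈ Fk F (dLeft K), α I with hAL
    set AR := ∑ I ∈ Fk F (dRight K), α I with hAR
    set aK := if K ∈ F then α K else 0 with haK
    have haK0 : 0 ≤ aK := by rw [haK]; by_cases h : K ∈ F <;> simp [h, hα K]
    have hysplit : y = yL + yR := setIntegral_children K (hfInt _) (hfInt _)
    have hwsplit : w = wL + wR := setIntegral_children K (hf2Int _) (hf2Int _)
    have hAsplit : ∑ I ∈ Fk F K, α I = aK + AL + AR := by
      rw [Fk_sum_decomp (g := α)]; try ring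
    have hPhisplit : ∑ I ∈ Fk F K, α I * ((∫ x in dSet I, f x) / dLen I) ^ 2 =
        (if K ∈ F then α K * ((∫ x in dSet K, f x) / dLen K) ^ 2 else 0) +
        ∑ I ∈ Fk F (dLeft K), α I * ((∫ x in dSet I, f x) / dLen I) ^ 2 +
        ∑ I ∈ Fk F (dRight K), α I * ((∫ x in dSet I, f x) / dLen I) ^ 2 :=
      Fk_sum_decomp _
    have htop : (if K ∈ F then α K * ((∫ x in dSet K, f x) / dLen K) ^ 2 else 0)
        = aK * (y / l) ^ 2 := by
      rw [haK]; split <;> simp <;> exact Or.inl rfl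
    have hlL : dLen (dLeft K) = l / 2 := dLen_left K
    have hlR : dLen (dRight K) = l / 2 := dLen_right K
    rw [hlL] at ihL
    rw [hlR] at ihR
    have hALnn : 0 ≤ AL := hA0 _
    have hARnn : 0 ≤ AR := hA0 _
    have hCarK : aK + AL + AR ≤ B * l := by rw [← hAsplit]; exact hCar K
    have hsL : 0 < B * (l / 2) + AL := by positivity
    have hsR : 0 < B * (l / 2) + AR := by positivity
    -- Engel step
    have hengel : y ^ 2 / (B * l + (AL + AR)) ≤
        yL ^ 2 / (B * (l / 2) + AL) + yR ^ 2 / (B * (l / 2) + AR) := by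
      have h := engel2 (u₁ := yL) (u₂ := yR) hsL hsR
      have hss : B * (l / 2) + AL + (B * (l / 2) + AR) = B * l + (AL + AR) := by ring
      rw [hss] at h
      rw [hysplit]
      exact h
    -- scalar step
    have hstep : aK / l ^ 2 + 4 * B ^ 2 / (B * l + (aK + AL + AR)) ≤
        4 * B ^ 2 / (B * l + (AL + AR)) :=
      step_ineq hB hl haK0 hALnn hARnn hCarK
    -- multiply hstep by y^2 ≥ 0
    have hy2 : (0:ℝ) ≤ y ^ 2 := sq_nonneg _
    have hstep' : aK / l ^ 2 * y ^ 2 + 4 * B ^ 2 / (B * l + (aK + AL + AR)) * y ^ 2 ≤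
        4 * B ^ 2 / (B * l + (AL + AR)) * y ^ 2 := by
      have := mul_le_mul_of_nonneg_right hstep hy2
      calc aK / l ^ 2 * y ^ 2 + 4 * B ^ 2 / (B * l + (aK + AL + AR)) * y ^ 2
          = (aK / l ^ 2 + 4 * B ^ 2 / (B * l + (aK + AL + AR))) * y ^ 2 := by ring
        _ ≤ _ := this
    -- combine
    rw [hPhisplit, htop, hAsplit]
    have hD : 0 < B * l + (AL + AR) := by positivity
    have hmain : 4 * B ^ 2 / (B * l + (AL + AR)) * y ^ 2 ≤
        4 * B ^ 2 * (yL ^ 2 / (B * (l / 2) + AL) + yR ^ 2 / (B * (l / 2) + AR)) := by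
      calc 4 * B ^ 2 / (B * l + (AL + AR)) * y ^ 2
          = 4 * B ^ 2 * (y ^ 2 / (B * l + (AL + AR))) := by ring
        _ ≤ 4 * B ^ 2 * (yL ^ 2 / (B * (l / 2) + AL) + yR ^ 2 / (B * (l / 2) + AR)) := by
            apply mul_le_mul_of_nonneg_left hengel (by positivity)
    have e1 : aK * (y / l) ^ 2 = aK / l ^ 2 * y ^ 2 := by
      rw [div_pow]; ring
    have e2 : 4 * B ^ 2 * y ^ 2 / (B * l + (aK + AL + AR)) =
        4 * B ^ 2 / (B * l + (aK + AL + AR)) * y ^ 2 := by ring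
    have e3 : 4 * B ^ 2 * yL ^ 2 / (B * (l / 2) + AL) =
        4 * B ^ 2 * (yL ^ 2 / (B * (l / 2) + AL)) := by ring
    have e4 : 4 * B ^ 2 * yR ^ 2 / (B * (l / 2) + AR) =
        4 * B ^ 2 * (yR ^ 2 / (B * (l / 2) + AR)) := by ring
    rw [e3] at ihL
    rw [e4] at ihR
    rw [e1, e2, hwsplit]
    linarith [ihL, ihR, hstep', hmain]

lemma sqrt_le_half (y : ℝ) : Real.sqrt y ≤ (1 + |y|) / 2 := by
  have h1 : Real.sqrt y ≤ Real.sqrt |y| := Real.sqrt_le_sqrt (le_abs_self y)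
  have h2 : Real.sqrt |y| ^ 2 = |y| := Real.sq_sqrt (abs_nonneg y)
  nlinarith [Real.sqrt_nonneg |y|, sq_nonneg (Real.sqrt |y| - 1)]

lemma integrableOn_dSet {g : ℝ → ℝ} (hg : MeasureTheory.LocallyIntegrable g volume)
    (K : DI) : IntegrableOn g (dSet K) volume := by
  have h := hg.integrableOn_isCompact (isCompact_Icc (a := dA K) (b := dA K + dLen K))
  apply h.mono_set
  rw [dSet_eq]
  exact Set.Ico_subset_Icc_self

lemma sqrt_integrableOn {g : ℝ → ℝ} (K : DI) (hg : IntegrableOn g (dSet K) volume) :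
    IntegrableOn (fun x => Real.sqrt (g x)) (dSet K) volume := by
  have hbound : IntegrableOn (fun x => (1 + |g x|) / 2) (dSet K) volume := by
    apply Integrable.div_const
    exact (integrableOn_const (volume_dSet_lt_top K).ne).add hg.abs
  apply Integrable.mono' hbound
  · exact Real.continuous_sqrt.comp_aestronglyMeasurable hg.aestronglyMeasurable
  · apply Filter.Eventually.of_forall
    intro x
    rw [Real.norm_of_nonneg (Real.sqrt_nonneg _)]
    exact sqrt_le_half (g x)

/-- Little Lemma: dividing a Lebesgue-Carleson sequence of intensity `B` by `m_I(v⁻¹)`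
gives a `v`-Carleson sequence of intensity at most `4B`. -/
theorem stmt2 (v : ℝ → ℝ) (hv : IsWeight v) (hv' : IsWeight (inv' v))
    (α : DI → ℝ) (hα : ∀ I, 0 ≤ α I) (B : ℝ)
    (hCar : ∀ J : DI, ∀ F : Finset DI, (∀ I ∈ F, dSub I J) → ∑ I ∈ F, α I ≤ B * dLen J) :
    IsCarleson v (fun I => α I / avg I (inv' v)) (4 * B) := by
  intro J F hF
  have hB0 : 0 ≤ B := by
    have h := hCar J ∅ (by simp)
    simp only [Finset.sum_empty] at h
    nlinarith [dLen_pos J]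
  rcases eq_or_lt_of_le hB0 with hB | hB
  · -- degenerate case B = 0
    have hall : ∀ I : DI, α I = 0 := by
      intro I
      refine le_antisymm ?_ (hα I)
      have h := hCar I {I} (by intro I' hI'; rw [Finset.mem_singleton] at hI'; rw [hI']; exact dSub_refl I)
      rw [← hB] at h
      simpa using h
    have h0 : ∀ I ∈ F, α I / avg I (inv' v) = 0 := by
      intro I _; rw [hall I]; simp
    rw [Finset.sum_congr rfl h0, Finset.sum_const, smul_zero, ← hB]
    simp
  -- main case
  have hvpos : ∀ᵐ x ∂(volume : Measure ℝ), 0 < v x := hv.2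
  have hupos : ∀ᵐ x ∂(volume : Measure ℝ), 0 < inv' v x := hv'.2
  set u := inv' v with hu
  set f := fun x => Real.sqrt (v x) with hf
  have hvK : ∀ K : DI, IntegrableOn v (dSet K) volume := integrableOn_dSet hv.1
  have huK : ∀ K : DI, IntegrableOn u (dSet K) volume := integrableOn_dSet hv'.1
  have hfK : ∀ K : DI, IntegrableOn f (dSet K) volume := fun K => sqrt_integrableOn K (hvK K)
  have hgK : ∀ K : DI, IntegrableOn (fun x => Real.sqrt (u x)) (dSet K) volume :=
    fun K => sqrt_integrableOn K (huK K)
  have haef2 : ∀ K : DI, v =ᵐ[volume.restrict (dSet K)] fun x => f x ^ 2 := by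
    intro K
    apply ae_restrict_of_ae
    filter_upwards [hvpos] with x hx
    rw [hf]; simp only
    rw [Real.sq_sqrt hx.le]
  have hf2 : ∀ K : DI, IntegrableOn (fun x => f x ^ 2) (dSet K) volume :=
    fun K => (hvK K).congr (haef2 K)
  have hif2 : ∀ K : DI, ∫ x in dSet K, f x ^ 2 = ∫ x in dSet K, v x :=
    fun K => (integral_congr_ae (haef2 K)).symm
  have hconst : ∀ K : DI, IntegrableOn (fun _ : ℝ => (1:ℝ)) (dSet K) volume :=
    fun K => integrableOn_const (volume_dSet_lt_top K).ne
  have hCS : ∀ K : DI, (∫ x in dSet K, f x) ^ 2 ≤ dLen K * ∫ x in dSet K, f x ^ 2 := by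
    intro K
    have h := integral_cs (μ := volume.restrict (dSet K)) (p := f) (q := fun _ => (1:ℝ))
      (hf2 K) (by simp only [one_pow]; exact hconst K) (by simp only [mul_one]; exact hfK K)
    simp only [mul_one, one_pow] at h
    rw [setIntegral_one K] at h
    linarith [h]
  -- positivity of ∫ u
  have huIpos : ∀ K : DI, 0 < ∫ x in dSet K, u x := by
    intro K
    rw [setIntegral_pos_iff_support_of_nonneg_ae
      (ae_restrict_of_ae (hupos.mono fun x h => h.le)) (huK K)]
    have hnull : volume (Function.support u)ᶜ = 0 := by
      have h2 : volume {x : ℝ | ¬ 0 < u x} = 0 := ae_iff.1 hupos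
      refine measure_mono_null ?_ h2
      intro x hx
      simp only [Set.mem_compl_iff, Function.mem_support, not_not] at hx
      simp only [Set.mem_setOf_eq, hx]
      exact lt_irrefl 0
    rw [Set.inter_comm, measure_inter_conull hnull, volume_dSet]
    exact ENNReal.ofReal_pos.2 (dLen_pos K)
  -- the key pointwise (per-interval) estimate : l^3 ≤ y^2 * ∫u
  have hkey : ∀ K : DI, dLen K ^ 3 ≤ (∫ x in dSet K, f x) ^ 2 * ∫ x in dSet K, u x := by
    intro K
    have hl := dLen_pos K
    set yI := ∫ x in dSet K, f x with hyI
    set zI := ∫ x in dSet K, Real.sqrt (u x) with hzI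
    set uI := ∫ x in dSet K, u x with huI
    have hyn : 0 ≤ yI := setIntegral_nonneg (measurableSet_dSet K) fun x _ => Real.sqrt_nonneg _
    have hzn : 0 ≤ zI := setIntegral_nonneg (measurableSet_dSet K) fun x _ => Real.sqrt_nonneg _
    -- CS1 : l^2 ≤ yI * zI
    have hpq1 : (fun x => Real.sqrt (Real.sqrt (v x)) * Real.sqrt (Real.sqrt (u x)))
        =ᵐ[volume.restrict (dSet K)] fun _ => (1:ℝ) := by
      apply ae_restrict_of_ae
      filter_upwards [hvpos] with x hx
      have hsv : 0 < Real.sqrt (v x) := Real.sqrt_pos.2 hx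
      have hssv : 0 < Real.sqrt (Real.sqrt (v x)) := Real.sqrt_pos.2 hsv
      have hux : u x = (v x)⁻¹ := rfl
      rw [hux, Real.sqrt_inv, Real.sqrt_inv]
      field_simp
    have hsq1 : (fun x => Real.sqrt (Real.sqrt (v x)) ^ 2) = f := by
      funext x; exact Real.sq_sqrt (Real.sqrt_nonneg _)
    have hsq2 : (fun x => Real.sqrt (Real.sqrt (u x)) ^ 2) = fun x => Real.sqrt (u x) := by
      funext x; exact Real.sq_sqrt (Real.sqrt_nonneg _)
    have cs1 := integral_cs (μ := volume.restrict (dSet K))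
      (p := fun x => Real.sqrt (Real.sqrt (v x))) (q := fun x => Real.sqrt (Real.sqrt (u x)))
      (by rw [hsq1]; exact hfK K) (by rw [hsq2]; exact hgK K)
      ((hconst K).congr hpq1.symm)
    rw [integral_congr_ae hpq1, setIntegral_one K, hsq1, hsq2] at cs1
    -- cs1 : l^2 ≤ yI * zI
    -- CS2 : zI^2 ≤ uI * l
    have hsqu : (fun x => Real.sqrt (u x) ^ 2) =ᵐ[volume.restrict (dSet K)] u := by
      apply ae_restrict_of_ae
      filter_upwards [hupos] with x hx
      exact Real.sq_sqrt hx.le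
    have cs2 := integral_cs (μ := volume.restrict (dSet K))
      (p := fun x => Real.sqrt (u x)) (q := fun _ => (1:ℝ))
      ((huK K).congr hsqu.symm) (by simp only [one_pow]; exact hconst K) (by simp only [mul_one]; exact hgK K)
    simp only [mul_one, one_pow] at cs2
    rw [integral_congr_ae hsqu, setIntegral_one K] at cs2
    -- combine
    have h3 : dLen K ^ 2 * dLen K ^ 2 ≤ (yI * zI) * (yI * zI) :=
      mul_le_mul cs1 cs1 (by positivity) (mul_nonneg hyn hzn)
    have h5 : yI ^ 2 * zI ^ 2 ≤ yI ^ 2 * (uI * dLen K) :=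
      mul_le_mul_of_nonneg_left cs2 (sq_nonneg yI)
    have h6 : dLen K ^ 3 * dLen K ≤ (yI ^ 2 * uI) * dLen K := by nlinarith [h3, h5]
    exact le_of_mul_le_mul_right h6 hl
  -- per-term bound
  have hterm : ∀ I : DI, α I / avg I u ≤ α I * ((∫ x in dSet I, f x) / dLen I) ^ 2 := by
    intro I
    have hl := dLen_pos I
    have huI := huIpos I
    have havg : avg I u = (∫ x in dSet I, u x) / dLen I := by
      unfold avg; rw [inv_mul_eq_div]
    have havgpos : 0 < avg I u := by rw [havg]; positivity
    rw [div_le_iff₀ havgpos, havg]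
    have h1 : 1 ≤ ((∫ x in dSet I, f x) / dLen I) ^ 2 * ((∫ x in dSet I, u x) / dLen I) := by
      rw [div_pow, div_mul_div_comm, le_div_iff₀ (by positivity)]
      calc 1 * (dLen I ^ 2 * dLen I) = dLen I ^ 3 := by ring
        _ ≤ (∫ x in dSet I, f x) ^ 2 * ∫ x in dSet I, u x := hkey I
    calc α I = α I * 1 := by ring
      _ ≤ α I * (((∫ x in dSet I, f x) / dLen I) ^ 2 * ((∫ x in dSet I, u x) / dLen I)) :=
          mul_le_mul_of_nonneg_left h1 (hα I)
      _ = α I * ((∫ x in dSet I, f x) / dLen I) ^ 2 * ((∫ x in dSet I, u x) / dLen I) := by ring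
  -- Carleson hypothesis in the filtered form
  have hCarE : ∀ K : DI, ∑ I ∈ Fk F K, α I ≤ B * dLen K :=
    fun K => hCar K (Fk F K) (fun I hI => (mem_Fk.1 hI).2)
  have hFkJ : Fk F J = F := Finset.filter_true_of_mem hF
  have hemb := carleson_embedding f (fun x => Real.sqrt_nonneg _) hfK hf2 hCS F α hα B hB
    hCarE (Fmeas F J) J le_rfl
  rw [hFkJ] at hemb
  have hAJ : 0 ≤ ∑ I ∈ F, α I := Finset.sum_nonneg fun I _ => hα I
  have hsub : 0 ≤ 4 * B ^ 2 * (∫ x in dSet J, f x) ^ 2 / (B * dLen J + ∑ I ∈ F, α I) := by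
    have hd : 0 < B * dLen J + ∑ I ∈ F, α I := by
      have := dLen_pos J; positivity
    positivity
  calc ∑ I ∈ F, α I / avg I u ≤ ∑ I ∈ F, α I * ((∫ x in dSet I, f x) / dLen I) ^ 2 :=
        Finset.sum_le_sum fun I _ => hterm I
    _ ≤ 4 * B * (∫ x in dSet J, f x ^ 2) -
        4 * B ^ 2 * (∫ x in dSet J, f x) ^ 2 / (B * dLen J + ∑ I ∈ F, α I) := hemb
    _ ≤ 4 * B * (∫ x in dSet J, f x ^ 2) := by linarith [hsub]
    _ = 4 * B * wMass v J := by rw [hif2 J]; rfl
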